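/- Let R and R' be domains with fraction fields K and K', and fix algebraic closures K⁺ of K and K'⁺ of K'; let R⁺ and R'⁺ be the integral closures of R in K⁺ and of R' in K'⁺ respectively. Then any ring homomorphism f : R → R' lifts to a ring homomorphism f⁺ : R⁺ → R'⁺ (i.e. the composite R → R⁺ → R'⁺ equals the composite R → R' → R'⁺). Moreover, if f is injective then f⁺ can be chosen injective, and if f is surjective then f⁺ can be chosen surjective. -/

import Mathlib

/-- A finite sequence `y` of elements of a commutative ring `B` is a regular sequence on `B`:
for each `i`, multiplication by `y i` is injective on `B/(y_1,…,y_{i-1})B`,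
and `B ≠ (y_1,…,y_m)B`. -/
def IsRegSeq {B : Type*} [CommRing B] {m : ℕ} (y : Fin m → B) : Prop :=
  (∀ i : Fin m, ∀ b : B,
      y i * b ∈ Ideal.span (y '' {j : Fin m | j < i}) →
        b ∈ Ideal.span (y '' {j : Fin m | j < i})) ∧
  Ideal.span (Set.range y) ≠ ⊤

/-- A `B`-algebra (given by a ring hom `φ : R →+* B`) is Cohen-Macaulay with respect to a
sequence `x` of elements of `R` if `x` becomes a regular sequence in `B`. -/
def IsCMwrt {R B : Type*} [CommRing R] [CommRing B] (φ : R →+* B)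
    {d : ℕ} (x : Fin d → R) : Prop :=
  IsRegSeq fun i => φ (x i)

/-- `x` is a system of parameters of the noetherian local ring `R`: `d` is the Krull dimension,
all `x i` lie in the maximal ideal, and they generate an ideal whose radical is the maximal
ideal. -/
def IsSOP (R : Type*) [CommRing R] [IsLocalRing R] {d : ℕ} (x : Fin d → R) : Prop :=
  (d : WithBot ℕ∞) = ringKrullDim R ∧
  (∀ i, x i ∈ IsLocalRing.maximalIdeal R) ∧
  (Ideal.span (Set.range x)).radical = IsLocalRing.maximalIdeal R

/-- `B` (via the structure map `φ`) is a big Cohen-Macaulay `R`-algebra: it is Cohen-Macaulay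
with respect to every system of parameters of `R`. -/
def IsBigCM {R B : Type*} [CommRing R] [IsLocalRing R] [CommRing B] (φ : R →+* B) : Prop :=
  ∀ (d : ℕ) (x : Fin d → R), IsSOP R x → IsCMwrt φ x

/-- `A` (as an `R`-algebra) is an absolute integral closure of the domain `R`:
it is a domain containing `R`, integral over `R`, and absolutely integrally closed
(every monic polynomial of positive degree has a root); equivalently, it is the
integral closure of `R` in an algebraic closure of its fraction field. -/
structure IsAbsIntClosure (R A : Type*) [CommRing R] [CommRing A] [Algebra R A] : Prop where
  isDomain : IsDomain A
  injective : Function.Injective (algebraMap R A)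
  isIntegral : Algebra.IsIntegral R A
  monic_root : ∀ P : Polynomial A, P.Monic → 0 < P.degree → ∃ a : A, P.IsRoot a

/-- `B` is `π^{1/p^∞}`-almost Cohen-Macaulay with respect to `x`, where `π : ℕ → B` is a
compatible system of `p`-th power roots. -/
def IsAlmostCMwrt {R B : Type*} [CommRing R] [CommRing B] (φ : R →+* B)
    (π : ℕ → B) {d : ℕ} (x : Fin d → R) : Prop :=
  (∀ i : Fin d, ∀ b : B,
      φ (x i) * b ∈ Ideal.span ((fun j => φ (x j)) '' {j : Fin d | j < i}) →
        ∀ e : ℕ, π e * b ∈ Ideal.span ((fun j => φ (x j)) '' {j : Fin d | j < i})) ∧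
  ¬ Ideal.span (Set.range π) ≤ Ideal.span (Set.range fun j => φ (x j))


/-- In a domain where every monic polynomial of positive degree has a root, if the image
of a monic polynomial under a ring hom into a domain has a root, then that root is in
the range of the ring hom. -/
lemma root_mem_range_of_monic_splits {A B : Type*} [CommRing A] [IsDomain A]
    [CommRing B] [IsDomain B]
    (hroot : ∀ P : Polynomial A, P.Monic → 0 < P.degree → ∃ a : A, P.IsRoot a)
    (ψ : A →+* B) :
    ∀ (n : ℕ) (Q : Polynomial A), Q.natDegree ≤ n → Q.Monic →
      ∀ z : B, (Q.map ψ).eval z = 0 → z ∈ Set.range ψ := by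
  intro n
  induction n with
  | zero =>
    intro Q hd hm z hz
    have hd' : Q = 1 := (Polynomial.Monic.natDegree_eq_zero hm).mp (Nat.le_zero.mp hd)
    rw [hd', Polynomial.map_one, Polynomial.eval_one] at hz
    exact absurd hz one_ne_zero
  | succ n ih =>
    intro Q hd hm z hz
    by_cases h0 : Q.natDegree = 0
    · have h0' : Q = 1 := (Polynomial.Monic.natDegree_eq_zero hm).mp h0
      rw [h0', Polynomial.map_one, Polynomial.eval_one] at hz
      exact absurd hz one_ne_zero
    · have hdeg : 0 < Q.degree := Polynomial.natDegree_pos_iff_degree_pos.mp (Nat.pos_of_ne_zero h0)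
      obtain ⟨a, ha⟩ := hroot Q hm hdeg
      have hfac : (Polynomial.X - Polynomial.C a) * (Q /ₘ (Polynomial.X - Polynomial.C a)) = Q :=
        Polynomial.mul_divByMonic_eq_iff_isRoot.mpr ha
      set Q₁ := Q /ₘ (Polynomial.X - Polynomial.C a) with hQ₁
      have hQ₁monic : Q₁.Monic :=
        Polynomial.Monic.of_mul_monic_left (Polynomial.monic_X_sub_C a) (hfac ▸ hm)
      have hQ₁ne : Q₁ ≠ 0 := hQ₁monic.ne_zero
      have hdeg' : Q₁.natDegree ≤ n := by
        have : Q.natDegree = 1 + Q₁.natDegree := by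
          rw [← hfac, Polynomial.natDegree_mul (Polynomial.X_sub_C_ne_zero a) hQ₁ne,
            Polynomial.natDegree_X_sub_C]
        omega
      rw [← hfac, Polynomial.map_mul, Polynomial.eval_mul] at hz
      rcases mul_eq_zero.mp hz with h | h
      · refine ⟨a, ?_⟩
        have : z - ψ a = 0 := by
          simpa [Polynomial.eval_sub, Polynomial.map_sub] using h
        exact (sub_eq_zero.mp this).symm
      · exact ih Q₁ hdeg' hQ₁monic z h

/-- **Proposition 2.1 (1)**: any ring homomorphism `f : R → R'` between domains lifts to a
homomorphism `f⁺ : R⁺ → R'⁺` of absolute integral closures; if `f` is injective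
(resp. surjective) the lift can be chosen injective (resp. surjective). -/
theorem abs_int_closure_lift
    (R R' : Type) [CommRing R] [CommRing R'] [IsDomain R] [IsDomain R']
    (Rplus R'plus : Type) [CommRing Rplus] [CommRing R'plus]
    [Algebra R Rplus] [Algebra R' R'plus]
    (hRplus : IsAbsIntClosure R Rplus) (hR'plus : IsAbsIntClosure R' R'plus)
    (f : R →+* R') :
    ∃ fplus : Rplus →+* R'plus,
      (∀ r : R, fplus (algebraMap R Rplus r) = algebraMap R' R'plus (f r)) ∧
      (Function.Injective f → Function.Injective fplus) ∧
      (Function.Surjective f → Function.Surjective fplus) := by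
  haveI : IsDomain Rplus := hRplus.isDomain
  haveI : IsDomain R'plus := hR'plus.isDomain
  haveI : Algebra.IsIntegral R Rplus := hRplus.isIntegral
  haveI : Algebra.IsIntegral R' R'plus := hR'plus.isIntegral
  -- the big algebraically closed field
  let M := AlgebraicClosure (FractionRing R'plus)
  let emb : R'plus →+* M :=
    (algebraMap (FractionRing R'plus) M).comp (algebraMap R'plus (FractionRing R'plus))
  have embinj : Function.Injective emb := by
    intro x y hxy
    exact IsFractionRing.injective R'plus (FractionRing R'plus)
      ((algebraMap (FractionRing R'plus) M).injective hxy)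
  let g' : R →+* R'plus := (algebraMap R' R'plus).comp f
  let g : R →+* M := emb.comp g'
  have hkergg' : ∀ a : R, g a = 0 ↔ g' a = 0 := by
    intro a
    constructor
    · intro h
      apply embinj
      rw [map_zero]
      exact h
    · intro h
      show emb (g' a) = 0
      rw [h, map_zero]
  -- the prime ideal and a prime above it
  haveI hpprime : (RingHom.ker g').IsPrime := RingHom.ker_isPrime g'
  obtain ⟨q, hqprime, hq⟩ :=
    Ideal.exists_ideal_over_prime_of_isIntegral_of_isDomain (S := Rplus) (RingHom.ker g')
      (by rw [(RingHom.injective_iff_ker_eq_bot _).mp hRplus.injective]; exact bot_le)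
  haveI := hqprime
  set pc := q.comap (algebraMap R Rplus) with hpc
  haveI hpcprime : pc.IsPrime := by rw [hq]; exact hpprime
  haveI : Nontrivial (R ⧸ pc) := Ideal.Quotient.nontrivial_iff.mpr hpcprime.ne_top
  -- the induced map on R ⧸ pc
  let gbar : (R ⧸ pc) →+* M := Ideal.Quotient.lift pc g (by
    intro a ha
    rw [hq] at ha
    exact (hkergg' a).mpr ha)
  have hgbar_inj : Function.Injective gbar := by
    rw [RingHom.injective_iff_ker_eq_bot ]
    rw [eq_bot_iff]
    intro x hx
    obtain ⟨a, rfl⟩ := Ideal.Quotient.mk_surjective x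
    have hga : g a = 0 := hx
    have : a ∈ pc := by rw [hq]; exact (hkergg' a).mp hga
    rwa [Ideal.mem_bot, Ideal.Quotient.eq_zero_iff_mem]
  letI : Algebra (R ⧸ pc) M := gbar.toAlgebra
  haveI : Module.IsTorsionFree (R ⧸ pc) M :=
    haveI := (faithfulSMul_iff_algebraMap_injective (R ⧸ pc) M).mpr hgbar_inj; inferInstance
  haveI : Module.IsTorsionFree (R ⧸ pc) (Rplus ⧸ q) :=
    haveI := (faithfulSMul_iff_algebraMap_injective (R ⧸ pc) (Rplus ⧸ q)).mpr
      Ideal.algebraMap_quotient_injective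
    haveI : IsDomain (Rplus ⧸ q) := Ideal.Quotient.isDomain q
    FaithfulSMul.to_isTorsionFree (R ⧸ pc) (Rplus ⧸ q)
  haveI : Algebra.IsAlgebraic (R ⧸ pc) (Rplus ⧸ q) := inferInstance
  let φ : (Rplus ⧸ q) →ₐ[R ⧸ pc] M := IsAlgClosed.lift
  let fplus0 : Rplus →+* M := φ.toRingHom.comp (Ideal.Quotient.mk q)
  have hcomm0 : ∀ r : R, fplus0 (algebraMap R Rplus r) = g r := by
    intro r
    have h1 : (Ideal.Quotient.mk q) (algebraMap R Rplus r)
        = algebraMap (R ⧸ pc) (Rplus ⧸ q) (Ideal.Quotient.mk pc r) :=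
      (Ideal.quotientMap_mk (H := le_rfl)).symm
    show φ ((Ideal.Quotient.mk q) (algebraMap R Rplus r)) = g r
    rw [h1, φ.commutes]
    show gbar (Ideal.Quotient.mk pc r) = g r
    rw [Ideal.Quotient.lift_mk]
  have hker0 : fplus0.comp (algebraMap R Rplus) = g := RingHom.ext hcomm0
  -- the image of fplus0 lands in the range of emb
  have hrange : ∀ x : Rplus, fplus0 x ∈ emb.range := by
    intro x
    obtain ⟨P, Pm, hP⟩ := Algebra.IsIntegral.isIntegral (R := R) x
    have h1 : fplus0 (Polynomial.eval₂ (algebraMap R Rplus) x P) = 0 := by rw [hP, map_zero]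
    rw [Polynomial.hom_eval₂] at h1
    rw [hker0] at h1
    have h2 : Polynomial.eval₂ (emb.comp g') (fplus0 x) P = 0 := h1
    rw [← Polynomial.eval₂_map, Polynomial.eval₂_eq_eval_map] at h2
    obtain ⟨a, ha⟩ := root_mem_range_of_monic_splits hR'plus.monic_root emb
      (P.map g').natDegree (P.map g') le_rfl (Pm.map g') (fplus0 x) h2
    exact ⟨a, ha⟩
  -- build fplus
  let e : R'plus ≃+* (emb.range : Subring M) :=
    RingEquiv.ofLeftInverse (Function.leftInverse_invFun embinj)
  let fplus : Rplus →+* R'plus :=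
    e.symm.toRingHom.comp (fplus0.codRestrict emb.range hrange)
  have hembsymm : ∀ y : (emb.range : Subring M), emb (e.symm y) = (y : M) := by
    intro y
    have h := e.apply_symm_apply y
    have h2 : ((e (e.symm y)) : M) = emb (e.symm y) := RingEquiv.ofLeftInverse_apply _ _
    rw [h] at h2
    exact h2.symm
  have hembfplus : ∀ x : Rplus, emb (fplus x) = fplus0 x := fun x => hembsymm _
  have hcomm : ∀ r : R, fplus (algebraMap R Rplus r) = algebraMap R' R'plus (f r) := by
    intro r
    apply embinj
    rw [hembfplus, hcomm0]
    rfl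
  refine ⟨fplus, hcomm, ?_, ?_⟩
  · -- injectivity
    intro hf
    have hginj : Function.Injective g :=
      embinj.comp (hR'plus.injective.comp hf)
    have hker : (RingHom.ker fplus0).comap (algebraMap R Rplus) = ⊥ := by
      rw [eq_bot_iff]
      intro a ha
      have : fplus0 (algebraMap R Rplus a) = 0 := ha
      rw [hcomm0] at this
      rw [Ideal.mem_bot]
      exact hginj (by rw [this, map_zero])
    have : RingHom.ker fplus0 = ⊥ := Ideal.eq_bot_of_comap_eq_bot hker
    have h0 : Function.Injective fplus0 := (RingHom.injective_iff_ker_eq_bot _).mpr this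
    intro a b hab
    apply h0
    rw [← hembfplus, ← hembfplus, hab]
  · -- surjectivity
    intro hf b
    obtain ⟨Q, Qm, hQ⟩ := Algebra.IsIntegral.isIntegral (R := R') b
    have hQl : Q ∈ Polynomial.lifts f := by
      rw [Polynomial.lifts_iff_coeff_lifts]
      intro n
      exact hf _
    obtain ⟨P, hPmap, _, Pm⟩ := Polynomial.lifts_and_degree_eq_and_monic hQl Qm
    have hcompeq : fplus.comp (algebraMap R Rplus) = (algebraMap R' R'plus).comp f :=
      RingHom.ext hcomm
    have heval : ((P.map (algebraMap R Rplus)).map fplus).eval b = 0 := by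
      rw [Polynomial.map_map, hcompeq, ← Polynomial.map_map, hPmap,
        ← Polynomial.eval₂_eq_eval_map]
      exact hQ
    obtain ⟨a, ha⟩ := root_mem_range_of_monic_splits hRplus.monic_root fplus
      (P.map (algebraMap R Rplus)).natDegree (P.map (algebraMap R Rplus)) le_rfl
      (Pm.map _) b heval
    exact ⟨a, ha⟩
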